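/- Under softmax parameterization in one state with action set A = {1, …, n} where action 1 is distinguished, fix a direction d ∈ ℝⁿ with ‖d‖ = 1 and d₁ > d_i for all i ≠ 1. If θ ∈ ℝⁿ satisfies θ₁ − θ_i > M_d for all i ≠ 1, where M_d = 2·max_{i ≠ 1} ( ln(2(n−1)) − ln(d₁ − d_i) ), then for each fixed i ≠ 1 the second derivative at k = 0 of the function k ↦ exp(θ_i + k d_i) / ∑_{j=1}^n exp(θ_j + k d_j) is nonnegative. -/

import Mathlib

open Real Finset

-- term derivative
lemma term_deriv (a b : ℝ) (k : ℝ) :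
    HasDerivAt (fun k : ℝ => Real.exp (a + k * b)) (Real.exp (a + k * b) * b) k := by
  have h1 : HasDerivAt (fun k : ℝ => a + k * b) b k := by
    simpa using ((hasDerivAt_id k).mul_const b).const_add a
  simpa using h1.exp

lemma calc_part {m : ℕ} (hm : 0 < m) (a e : Fin m → ℝ)
    (hcore : 0 ≤ 2 * (∑ j, Real.exp (a j) * e j)^2
        - (∑ j, Real.exp (a j)) * (∑ j, Real.exp (a j) * (e j)^2)) :
    0 ≤ iteratedDeriv 2 (fun k : ℝ => (∑ j, Real.exp (a j + k * e j))⁻¹) 0 := by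
  have : Nonempty (Fin m) := ⟨⟨0, hm⟩⟩
  set g : ℝ → ℝ := fun k => ∑ j, Real.exp (a j + k * e j) with hg
  set g1 : ℝ → ℝ := fun k => ∑ j, Real.exp (a j + k * e j) * e j with hg1
  set g2 : ℝ → ℝ := fun k => ∑ j, Real.exp (a j + k * e j) * e j * e j with hg2
  have hgpos : ∀ k, 0 < g k := fun k =>
    Finset.sum_pos (fun j _ => Real.exp_pos _) Finset.univ_nonempty
  have hgd : ∀ k, HasDerivAt g (g1 k) k := fun k =>
    HasDerivAt.fun_sum (fun j _ => term_deriv (a j) (e j) k)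
  have hg1d : ∀ k, HasDerivAt g1 (g2 k) k := fun k =>
    HasDerivAt.fun_sum (fun j _ => (term_deriv (a j) (e j) k).mul_const (e j))
  have hd1 : ∀ k, HasDerivAt (fun k => (g k)⁻¹) (-(g1 k) / (g k)^2) k := fun k =>
    (hgd k).inv (ne_of_gt (hgpos k))
  have hderiv1 : deriv (fun k => (g k)⁻¹) = fun k => -(g1 k) / (g k)^2 :=
    funext fun k => (hd1 k).deriv
  have hne : (g 0)^2 ≠ 0 := pow_ne_zero _ (ne_of_gt (hgpos 0))
  have hd2 := HasDerivAt.div ((hg1d 0).neg) ((hgd 0).pow 2) hne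
  rw [show (2:ℕ) = 1 + 1 from rfl, iteratedDeriv_succ, iteratedDeriv_one, hderiv1,
    (show deriv (fun k => -g1 k / g k ^ 2) 0 = (-g2 0 * g 0 ^ 2 - -g1 0 * (((2:ℕ):ℝ) * g 0 ^ (2 - 1) * g1 0)) / (g 0 ^ 2) ^ 2 from hd2.deriv)]
  have hW := hgpos 0
  have hA : g1 0 = ∑ j, Real.exp (a j) * e j := by
    simp [hg1]
  have hB : g2 0 = ∑ j, Real.exp (a j) * (e j)^2 := by
    rw [hg2]
    exact Finset.sum_congr rfl fun j _ => by simp; ring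
  have hW0 : g 0 = ∑ j, Real.exp (a j) := by simp [hg]
  rw [hA, hB, hW0] at *
  set A := ∑ j, Real.exp (a j) * e j
  set B := ∑ j, Real.exp (a j) * (e j)^2
  set W := ∑ j, Real.exp (a j)
  apply div_nonneg
  · have hWpos : 0 < W := Finset.sum_pos (fun j _ => Real.exp_pos _) Finset.univ_nonempty
    have h := mul_nonneg hWpos.le hcore
    push_cast
    norm_num
    nlinarith [h]
  · positivity


lemma fun_rewrite {m : ℕ} (θ d : Fin m → ℝ) (i : Fin m) :
    (fun k : ℝ => Real.exp (θ i + k * d i) / ∑ j, Real.exp (θ j + k * d j)) =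
    fun k : ℝ => (∑ j, Real.exp ((θ j - θ i) + k * (d j - d i)))⁻¹ := by
  funext k
  have h1 : (∑ j, Real.exp ((θ j - θ i) + k * (d j - d i)))
      = (∑ j, Real.exp (θ j + k * d j)) / Real.exp (θ i + k * d i) := by
    rw [Finset.sum_div]
    refine Finset.sum_congr rfl fun j _ => ?_
    rw [← Real.exp_sub]
    congr 1
    ring
  rw [h1, inv_div]


set_option maxHeartbeats 1000000 in

lemma core_ineq {m : ℕ} (o i : Fin m) (hiE : i ∈ Finset.univ.erase o)
    (w c e : Fin m → ℝ) (q : ℝ) (hq1 : 1 ≤ q)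
    (hcard : (((Finset.univ.erase o) : Finset (Fin m)).card : ℝ) = q)
    (hwpos : ∀ j, 0 < w j)
    (hkey : ∀ j ∈ Finset.univ.erase o, ∀ a ∈ Finset.univ.erase o, ∀ b ∈ Finset.univ.erase o,
      4*q^2 * w j ≤ w o * (c a * c b))
    (hcpos : ∀ j ∈ Finset.univ.erase o, 0 < c j)
    (hc2 : ∀ j, (c j)^2 ≤ 2)
    (he2 : ∀ j, (e j)^2 ≤ 2)
    (hei : e i = 0)
    (heo : e o = c i)
    (hec : ∀ j, e j = c i - c j) :
    0 ≤ 2 * (∑ j, w j * e j)^2 - (∑ j, w j) * (∑ j, w j * (e j)^2) := by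
  set E : Finset (Fin m) := Finset.univ.erase o with hE
  set J : Finset (Fin m) := E.erase i with hJ
  have hqpos : (0:ℝ) < q := lt_of_lt_of_le one_pos hq1
  have hcei : 0 < c i := hcpos i hiE
  have hwonn : (0:ℝ) ≤ w o := (hwpos o).le
  -- cardinalities
  have hcard1 : 1 ≤ E.card := Finset.card_pos.mpr ⟨i, hiE⟩
  have hcardJ : ((J.card : ℕ) : ℝ) = q - 1 := by
    rw [hJ, Finset.card_erase_of_mem hiE, Nat.cast_sub hcard1, hcard]
    norm_num
  -- scalar sums
  set SW : ℝ := ∑ j ∈ E, w j with hSW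
  set SA : ℝ := ∑ j ∈ J, w j * e j with hSA
  set SB : ℝ := ∑ j ∈ J, w j * (e j)^2 with hSB
  set T : ℝ := ∑ j ∈ J, w j * c j with hT
  set S₁ : ℝ := ∑ j ∈ E, c j with hS₁
  clear_value SW SA SB T S₁
  have hSWnn : 0 ≤ SW := by rw [hSW]; exact Finset.sum_nonneg fun j _ => (hwpos j).le
  have hSBnn : 0 ≤ SB := by
    rw [hSB]; exact Finset.sum_nonneg fun j _ => mul_nonneg (hwpos j).le (sq_nonneg _)
  have hTnn : 0 ≤ T := by
    rw [hT]
    exact Finset.sum_nonneg fun j hj =>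
      mul_nonneg (hwpos j).le (hcpos j (Finset.mem_of_mem_erase hj)).le
  have hS₁nn : 0 ≤ S₁ := by rw [hS₁]; exact Finset.sum_nonneg fun j hj => (hcpos j hj).le
  -- decompositions
  have hWdec : ∑ j, w j = w o + SW := by
    rw [hSW]; exact (Finset.add_sum_erase _ w (Finset.mem_univ o)).symm
  have hAdec : ∑ j, w j * e j = w o * c i + SA := by
    rw [← Finset.add_sum_erase _ (fun j => w j * e j) (Finset.mem_univ o), heo]
    congr 1
    rw [hSA]
    exact (Finset.sum_erase _ (by rw [hei]; ring)).symm
  have hBdec : ∑ j, w j * (e j)^2 = w o * (c i)^2 + SB := by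
    rw [← Finset.add_sum_erase _ (fun j => w j * (e j)^2) (Finset.mem_univ o), heo]
    congr 1
    rw [hSB]
    exact (Finset.sum_erase _ (by rw [hei]; ring)).symm
  rw [hWdec, hAdec, hBdec]
  -- bounds
  have kSW : 4*q^2 * SW ≤ w o * c i * S₁ := by
    calc 4*q^2 * SW = ∑ j ∈ E, 4*q^2 * w j := by rw [hSW, Finset.mul_sum]
      _ ≤ ∑ j ∈ E, w o * (c i * c j) := Finset.sum_le_sum (fun j hj => hkey j hj i hiE j hj)
      _ = ∑ j ∈ E, (w o * c i) * c j := Finset.sum_congr rfl (fun j _ => by ring)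
      _ = w o * c i * S₁ := by rw [hS₁, ← Finset.mul_sum]
  have kT : 4*q^2 * T ≤ 2*(q-1) * (w o * c i) := by
    have h1 : ∀ j ∈ J, 4*q^2 * (w j * c j) ≤ 2 * (w o * c i) := by
      intro j hj
      have hjE : j ∈ E := Finset.mem_of_mem_erase hj
      have hk := hkey j hjE i hiE j hjE
      have hcj := hcpos j hjE
      nlinarith [hc2 j, mul_nonneg hwonn hcei.le, (hwpos j).le]
    calc 4*q^2 * T = ∑ j ∈ J, 4*q^2 * (w j * c j) := by rw [hT, Finset.mul_sum]
      _ ≤ J.card • (2 * (w o * c i)) := Finset.sum_le_card_nsmul _ _ _ h1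
      _ = ((J.card : ℕ) : ℝ) * (2 * (w o * c i)) := by rw [nsmul_eq_mul]
      _ = 2*(q-1) * (w o * c i) := by rw [hcardJ]; ring
  have kSB : 4*q^2 * SB ≤ 2*(q-1) * (w o * (c i)^2) := by
    have h1 : ∀ j ∈ J, 4*q^2 * (w j * (e j)^2) ≤ 2 * (w o * (c i)^2) := by
      intro j hj
      have hjE : j ∈ E := Finset.mem_of_mem_erase hj
      have hk := hkey j hjE i hiE i hiE
      nlinarith [he2 j, sq_nonneg (e j), mul_nonneg hwonn (sq_nonneg (c i)), (hwpos j).le]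
    calc 4*q^2 * SB = ∑ j ∈ J, 4*q^2 * (w j * (e j)^2) := by rw [hSB, Finset.mul_sum]
      _ ≤ J.card • (2 * (w o * (c i)^2)) := Finset.sum_le_card_nsmul _ _ _ h1
      _ = ((J.card : ℕ) : ℝ) * (2 * (w o * (c i)^2)) := by rw [nsmul_eq_mul]
      _ = 2*(q-1) * (w o * (c i)^2) := by rw [hcardJ]; ring
  have kSB2 : SB ≤ 2 * SW := by
    calc SB = ∑ j ∈ J, w j * (e j)^2 := hSB
      _ ≤ ∑ j ∈ J, 2 * w j := Finset.sum_le_sum (fun j hj => by nlinarith [he2 j, (hwpos j).le])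
      _ ≤ ∑ j ∈ E, 2 * w j := Finset.sum_le_sum_of_subset_of_nonneg (Finset.erase_subset _ _)
          (fun j _ _ => by linarith [hwpos j])
      _ = 2 * SW := by rw [hSW, ← Finset.mul_sum]
  have kSA : -SA ≤ T := by
    rw [hSA, hT, ← Finset.sum_neg_distrib]
    apply Finset.sum_le_sum
    intro j hj
    rw [hec j]
    nlinarith [mul_nonneg (hwpos j).le hcei.le]
  have kS1a : c i * S₁ ≤ 2*q := by
    calc c i * S₁ = ∑ j ∈ E, c i * c j := by rw [hS₁, ← Finset.mul_sum]
      _ ≤ E.card • (2:ℝ) := Finset.sum_le_card_nsmul _ _ _ (fun j hj => by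
          nlinarith [hc2 i, hc2 j, hcei.le, (hcpos j hj).le])
      _ = ((E.card : ℕ) : ℝ) * 2 := by rw [nsmul_eq_mul]
      _ = 2*q := by rw [hcard]; ring
  have kS1b : S₁^2 ≤ 2*q^2 := by
    have hsq2 : (Real.sqrt 2)^2 = 2 := Real.sq_sqrt (by norm_num)
    have h1 : S₁ ≤ q * Real.sqrt 2 := by
      calc S₁ = ∑ j ∈ E, c j := hS₁
        _ ≤ E.card • (Real.sqrt 2) := Finset.sum_le_card_nsmul _ _ _ (fun j hj => by
            nlinarith [hc2 j, (hcpos j hj).le, Real.sqrt_nonneg 2])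
        _ = ((E.card : ℕ) : ℝ) * Real.sqrt 2 := by rw [nsmul_eq_mul]
        _ = q * Real.sqrt 2 := by rw [hcard]
    nlinarith [mul_self_le_mul_self hS₁nn h1, Real.sqrt_nonneg 2]
  -- m-lemmas
  have m1 : -(16*q^4) * ((w o * c i) * SA) ≤ 8*q^2*(q-1) * (w o * c i)^2 := by
    have h1 := mul_le_mul_of_nonneg_left kSA (show (0:ℝ) ≤ 16*q^4*(w o * c i) by positivity)
    have h2 := mul_le_mul_of_nonneg_left kT (show (0:ℝ) ≤ 4*q^2*(w o * c i) by positivity)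
    nlinarith [h1, h2]
  have m2 : 16*q^4 * (w o * SB) ≤ 8*q^2*(q-1) * (w o * c i)^2 := by
    have h1 := mul_le_mul_of_nonneg_left kSB (show (0:ℝ) ≤ 4*q^2*(w o) by positivity)
    nlinarith [h1]
  have m3 : 16*q^4 * ((w o * (c i)^2) * SW) ≤ 8*q^3 * (w o * c i)^2 := by
    have h1 := mul_le_mul_of_nonneg_left kSW (show (0:ℝ) ≤ 4*q^2*(w o * (c i)^2) by positivity)
    have h2 := mul_le_mul_of_nonneg_left kS1a (show (0:ℝ) ≤ 4*q^2*(w o * c i)^2 by positivity)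
    nlinarith [h1, h2]
  have m4 : 16*q^4 * (SW * SB) ≤ 4*q^2 * (w o * c i)^2 := by
    have hs1 := mul_le_mul_of_nonneg_left kSB2 (show (0:ℝ) ≤ 16*q^4*SW by positivity)
    have hs2 : (4*q^2*SW)^2 ≤ (w o * c i * S₁)^2 := by
      apply pow_le_pow_left₀ (by positivity) kSW
    have hs3 := mul_le_mul_of_nonneg_left kS1b (show (0:ℝ) ≤ (w o * c i)^2 by positivity)
    nlinarith [hs1, hs2, hs3]
  -- final assembly
  have hfin : 0 ≤ 16*q^4 * (2 * (w o * c i + SA)^2 - (w o + SW) * (w o * (c i)^2 + SB)) := by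
    have hsq : 0 ≤ 4*q^2*(w o * c i)^2*(2*q-3)^2 := by positivity
    have hSA2 : 0 ≤ 32*q^4*SA^2 := by positivity
    linarith [m1, m2, m3, m4, hsq, hSA2]
  nlinarith [hfin, pow_pos hqpos 4]


/-- Softmax local convexity of non-optimal action probabilities along a
feasible direction, at parameters with dominating optimal logit. -/
theorem stmt_2 {n : ℕ} (hn : 2 ≤ n) (θ d : Fin n → ℝ)
    (hd_norm : Real.sqrt (∑ i, d i ^ 2) = 1)
    (hd : ∀ i : Fin n, i ≠ ⟨0, by omega⟩ → d ⟨0, by omega⟩ > d i)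
    (Md : ℝ)
    (hMd : Md = 2 * (Finset.univ.erase (⟨0, by omega⟩ : Fin n)).sup'
      (by
        refine Finset.nonempty_iff_ne_empty.mpr ?_
        intro hcontra
        have h1 : (⟨1, by omega⟩ : Fin n) ∈ Finset.univ.erase (⟨0, by omega⟩ : Fin n) := by
          refine Finset.mem_erase.mpr ⟨?_, Finset.mem_univ _⟩
          intro h; exact absurd (congrArg Fin.val h) (by simp)
        simp [hcontra] at h1)
      (fun i => Real.log (2 * (n - 1)) - Real.log (d ⟨0, by omega⟩ - d i)))
    (hθ : ∀ i : Fin n, i ≠ ⟨0, by omega⟩ → θ ⟨0, by omega⟩ - θ i > Md)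
    (i : Fin n) (hi : i ≠ ⟨0, by omega⟩) :
    0 ≤ iteratedDeriv 2
      (fun k : ℝ => Real.exp (θ i + k * d i) / ∑ j, Real.exp (θ j + k * d j)) 0 := by
  have hn0 : 0 < n := by omega
  set o : Fin n := ⟨0, hn0⟩ with ho
  have hq1 : (1:ℝ) ≤ (n:ℝ) - 1 := by
    have : (2:ℝ) ≤ (n:ℝ) := by exact_mod_cast hn
    linarith
  have hiE : i ∈ Finset.univ.erase o := Finset.mem_erase.mpr ⟨hi, Finset.mem_univ i⟩
  have hcard : (((Finset.univ.erase o) : Finset (Fin n)).card : ℝ) = (n:ℝ) - 1 := by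
    rw [Finset.card_erase_of_mem (Finset.mem_univ o), Finset.card_univ, Fintype.card_fin,
      Nat.cast_sub (by omega)]
    norm_num
  -- norm facts
  have hsum_nonneg : (0:ℝ) ≤ ∑ j, d j ^ 2 := by positivity
  have hsum_sq : ∑ j, d j ^ 2 = 1 := by
    have h := Real.sq_sqrt hsum_nonneg
    rw [hd_norm] at h
    linarith
  have hpair : ∀ j k : Fin n, (d j - d k)^2 ≤ 2 := by
    intro j k
    rcases eq_or_ne j k with rfl | hjk
    · norm_num
    · have hle : d j ^2 + d k^2 ≤ ∑ l, d l ^2 := by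
        have h := Finset.sum_le_sum_of_subset_of_nonneg
          (Finset.subset_univ ({j, k} : Finset (Fin n))) (fun l _ _ => sq_nonneg (d l))
        rwa [Finset.sum_pair hjk] at h
      nlinarith [sq_nonneg (d j + d k), hsum_sq, hle]
  -- margin facts
  obtain ⟨X, hX1, hX2⟩ : ∃ X : ℝ, Md = 2 * X ∧
      ∀ a : Fin n, a ≠ o → Real.log (2*((n:ℝ)-1)) - Real.log (d o - d a) ≤ X := by
    refine ⟨_, hMd, ?_⟩
    intro a ha
    have hmem : a ∈ Finset.univ.erase (⟨0, by omega⟩ : Fin n) :=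
      Finset.mem_erase.mpr ⟨by exact ha, Finset.mem_univ _⟩
    exact Finset.le_sup'
      (fun j => Real.log (2 * ((n:ℝ) - 1)) - Real.log (d (⟨0, by omega⟩ : Fin n) - d j)) hmem
  have hkey : ∀ j ∈ Finset.univ.erase o, ∀ a ∈ Finset.univ.erase o, ∀ b ∈ Finset.univ.erase o,
      4*((n:ℝ)-1)^2 * Real.exp (θ j - θ i) ≤ Real.exp (θ o - θ i) * ((d o - d a) * (d o - d b)) := by
    intro j hj a ha b hb
    have hj' : j ≠ o := (Finset.mem_erase.mp hj).1
    have ha' : a ≠ o := (Finset.mem_erase.mp ha).1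
    have hb' : b ≠ o := (Finset.mem_erase.mp hb).1
    have hca : 0 < d o - d a := sub_pos.mpr (hd a ha')
    have hcb : 0 < d o - d b := sub_pos.mpr (hd b hb')
    have h2q : (0:ℝ) < 2*((n:ℝ)-1) := by linarith
    have h1 := hX2 a ha'
    have h2 := hX2 b hb'
    have hθj : θ o - θ j > Md := hθ j hj'
    rw [hX1] at hθj
    have hlt : θ j - θ o < (Real.log (d o - d a) + Real.log (d o - d b))
        - (Real.log (2*((n:ℝ)-1)) + Real.log (2*((n:ℝ)-1))) := by linarith
    have h4 : (0:ℝ) < 4*((n:ℝ)-1)^2 := by positivity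
    have hval : Real.exp ((Real.log (d o - d a) + Real.log (d o - d b))
        - (Real.log (2*((n:ℝ)-1)) + Real.log (2*((n:ℝ)-1))))
        = (d o - d a) * (d o - d b) / (4*((n:ℝ)-1)^2) := by
      rw [Real.exp_sub, Real.exp_add, Real.exp_add, Real.exp_log hca, Real.exp_log hcb,
        Real.exp_log h2q, show (2*((n:ℝ)-1))*(2*((n:ℝ)-1)) = 4*((n:ℝ)-1)^2 by ring]
    have hexp : Real.exp (θ j - θ o) * (4*((n:ℝ)-1)^2) ≤ (d o - d a) * (d o - d b) := by
      have hh := (Real.exp_lt_exp.mpr hlt).le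
      rw [hval] at hh
      exact (le_div_iff₀ h4).mp hh
    have hW₁ : (0:ℝ) < Real.exp (θ o - θ i) := Real.exp_pos _
    have heq : θ j - θ i = (θ o - θ i) + (θ j - θ o) := by ring
    rw [heq, Real.exp_add]
    calc 4*((n:ℝ)-1)^2 * (Real.exp (θ o - θ i) * Real.exp (θ j - θ o))
        = Real.exp (θ o - θ i) * (Real.exp (θ j - θ o) * (4*((n:ℝ)-1)^2)) := by ring
      _ ≤ Real.exp (θ o - θ i) * ((d o - d a) * (d o - d b)) :=
          mul_le_mul_of_nonneg_left hexp hW₁.le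
  -- apply
  have hcore := core_ineq o i hiE (fun j => Real.exp (θ j - θ i)) (fun j => d o - d j)
    (fun j => d j - d i) ((n:ℝ)-1) hq1 hcard (fun j => Real.exp_pos _) hkey
    (fun j hj => sub_pos.mpr (hd j (Finset.mem_erase.mp hj).1))
    (fun j => hpair o j) (fun j => hpair j i) (by simp) rfl (fun j => by ring)
  rw [fun_rewrite θ d i]
  exact calc_part hn0 (fun j => θ j - θ i) (fun j => d j - d i) hcore
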